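/- Let k = p^a q^b l with gcd(l, pq) = 1, 0 ≤ a ≤ m−1, 0 ≤ b ≤ n−1, and set ζ_p = β^{p^{m−1} q^{n+b}} (a primitive p-th root of unity). Then for all 1 ≤ i ≤ m: S_1^{(i,0)}(β^k) = p^{i−1}(p−1)/2 (as an element of F_{4^{d*}}) if i ≤ a; S_1^{(i,0)}(β^k) = Σ_{t ∈ D_1^{(p)}} ζ_p^{lt} if i = a+1; and S_1^{(i,0)}(β^k) = 0 if i > a+1. -/

import Mathlib

open Finset Polynomial

noncomputable section

/-- The field `F₄` with four elements. -/
abbrev F4 : Type := GaloisField 2 2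

/-- Generic generalized cyclotomic class of index `0` modulo `M`:
`{ g^(2t) * y^k mod M : 0 ≤ t < dHalf, 0 ≤ k < e }`. -/
def GC0 (g y M dHalf e : ℕ) : Finset ℕ :=
  ((Finset.range dHalf) ×ˢ (Finset.range e)).image
    (fun tk => g ^ (2 * tk.1) * y ^ tk.2 % M)

/-- Generic generalized cyclotomic class of index `1` modulo `M`: `g · GC0 (mod M)`. -/
def GC1 (g y M dHalf e : ℕ) : Finset ℕ :=
  (GC0 g y M dHalf e).image (fun x => g * x % M)

/-- Class of index `h ∈ {0,1}`. -/
def GC (h g y M dHalf e : ℕ) : Finset ℕ :=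
  if h = 0 then GC0 g y M dHalf e else GC1 g y M dHalf e

/-- `e_{i,j} = gcd(p^{i-1}(p-1), q^{j-1}(q-1))`. -/
def eij (p q i j : ℕ) : ℕ := Nat.gcd (p ^ (i - 1) * (p - 1)) (q ^ (j - 1) * (q - 1))

/-- `d_{i,j} = p^{i-1}(p-1) q^{j-1}(q-1) / e_{i,j}`. -/
def dij (p q i j : ℕ) : ℕ := p ^ (i - 1) * (p - 1) * (q ^ (j - 1) * (q - 1)) / eij p q i j

/-- `D_h^{(p^i q^j)}`. -/
def DPQ (p q g y h i j : ℕ) : Finset ℕ :=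
  GC h g y (p ^ i * q ^ j) (dij p q i j / 2) (eij p q i j)

/-- `D_h^{(2 p^i q^j)}`. -/
def D2PQ (p q g y h i j : ℕ) : Finset ℕ :=
  GC h g y (2 * (p ^ i * q ^ j)) (dij p q i j / 2) (eij p q i j)

/-- `D_h^{(p^i)}`. -/
def DP (p g h i : ℕ) : Finset ℕ := GC h g 1 (p ^ i) (p ^ (i - 1) * (p - 1) / 2) 1

/-- `D_h^{(2p^i)}`. -/
def D2P (p g h i : ℕ) : Finset ℕ := GC h g 1 (2 * p ^ i) (p ^ (i - 1) * (p - 1) / 2) 1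

/-- `D_h^{(q^j)}`. -/
def DQ (q g h j : ℕ) : Finset ℕ := GC h g 1 (q ^ j) (q ^ (j - 1) * (q - 1) / 2) 1

/-- `D_h^{(2q^j)}`. -/
def D2Q (q g h j : ℕ) : Finset ℕ := GC h g 1 (2 * q ^ j) (q ^ (j - 1) * (q - 1) / 2) 1

/-- `c · A`. -/
def scaled (c : ℕ) (A : Finset ℕ) : Finset ℕ := A.image (fun x => c * x)

/-- `H_h^{(p^i q^j)} = p^{m-i} q^{n-j} D_h^{(p^i q^j)}`. -/
def HPQ (p q m n g y h i j : ℕ) : Finset ℕ :=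
  scaled (p ^ (m - i) * q ^ (n - j)) (DPQ p q g y h i j)

/-- `H_h^{(2 p^i q^j)} = p^{m-i} q^{n-j} D_h^{(2 p^i q^j)}`. -/
def H2PQ (p q m n g y h i j : ℕ) : Finset ℕ :=
  scaled (p ^ (m - i) * q ^ (n - j)) (D2PQ p q g y h i j)

/-- `H_h^{(p^i)} = p^{m-i} q^n D_h^{(p^i)}`. -/
def HP (p q m n g h i : ℕ) : Finset ℕ := scaled (p ^ (m - i) * q ^ n) (DP p g h i)

/-- `H_h^{(2p^i)} = p^{m-i} q^n D_h^{(2p^i)}`. -/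
def H2P (p q m n g h i : ℕ) : Finset ℕ := scaled (p ^ (m - i) * q ^ n) (D2P p g h i)

/-- `H_h^{(q^j)} = p^m q^{n-j} D_h^{(q^j)}`. -/
def HQ (p q m n g h j : ℕ) : Finset ℕ := scaled (p ^ m * q ^ (n - j)) (DQ q g h j)

/-- `H_h^{(2q^j)} = p^m q^{n-j} D_h^{(2q^j)}`. -/
def H2Q (p q m n g h j : ℕ) : Finset ℕ := scaled (p ^ m * q ^ (n - j)) (D2Q q g h j)

/-- `⋃_{i,j} H_h^{(2p^i q^j)} ∪ ⋃_i H_h^{(2p^i)} ∪ ⋃_j H_h^{(2q^j)}`. -/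
def UnionH (p q m n g y h : ℕ) : Finset ℕ :=
  ((Finset.Icc 1 m).biUnion fun i => (Finset.Icc 1 n).biUnion fun j => H2PQ p q m n g y h i j)
    ∪ ((Finset.Icc 1 m).biUnion fun i => H2P p q m n g h i)
    ∪ ((Finset.Icc 1 n).biUnion fun j => H2Q p q m n g h j)

/-- `⋃_{i,j} 2H_h^{(p^i q^j)} ∪ ⋃_i 2H_h^{(p^i)} ∪ ⋃_j 2H_h^{(q^j)}`. -/
def Union2H (p q m n g y h : ℕ) : Finset ℕ :=
  ((Finset.Icc 1 m).biUnion fun i =>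
      (Finset.Icc 1 n).biUnion fun j => scaled 2 (HPQ p q m n g y h i j))
    ∪ ((Finset.Icc 1 m).biUnion fun i => scaled 2 (HP p q m n g h i))
    ∪ ((Finset.Icc 1 n).biUnion fun j => scaled 2 (HQ p q m n g h j))

/-- The quaternary generalized cyclotomic sequence of period `2 p^m q^n`. -/
def seqS (p q m n g y : ℕ) (a b c d e : F4) (u : ℕ) : F4 :=
  let v := u % (2 * (p ^ m * q ^ n))
  if v = 0 then 0
  else if v = p ^ m * q ^ n then e
  else if v ∈ UnionH p q m n g y 0 then a
  else if v ∈ UnionH p q m n g y 1 then b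
  else if v ∈ Union2H p q m n g y 0 then c
  else if v ∈ Union2H p q m n g y 1 then d
  else 0

/-- The generating polynomial `S(x) = ∑_{u=0}^{2p^m q^n - 1} s_u x^u ∈ F₄[x]`. -/
def genPoly (p q m n g y : ℕ) (a b c d e : F4) : Polynomial F4 :=
  ∑ u ∈ Finset.range (2 * (p ^ m * q ^ n)),
    Polynomial.C (seqS p q m n g y a b c d e u) * Polynomial.X ^ u

/-- The linear complexity of a sequence over a field: the least `L > 0` admitting a linear
recurrence `s_{u+L} = c_1 s_{u+L-1} + ⋯ + c_L s_u`. -/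
def LinearComplexity {F : Type*} [Field F] (s : ℕ → F) : ℕ :=
  sInf {L | 0 < L ∧ ∃ c : Fin L → F,
    ∀ u, s (u + L) = ∑ i : Fin L, c i * s (u + L - 1 - (i : ℕ))}


private lemma pow_eq_of_modEq' {K : Type*} [Monoid K] {x : K} {e : ℕ} (hx : x ^ e = 1)
    {a b : ℕ} (h : a ≡ b [MOD e]) : x ^ a = x ^ b := by
  rcases le_total a b with hab | hab
  · obtain ⟨u, hu⟩ := (Nat.modEq_iff_dvd' hab).mp h
    have hb : b = a + e * u := by omega
    rw [hb, pow_add, pow_mul, hx, one_pow, mul_one]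
  · obtain ⟨u, hu⟩ := (Nat.modEq_iff_dvd' hab).mp h.symm
    have hb : a = b + e * u := by omega
    rw [hb, pow_add, pow_mul, hx, one_pow, mul_one]

private lemma sum_range_mul_split {K : Type*} [AddCommMonoid K] (f : ℕ → K) (Q r : ℕ) :
    ∑ t ∈ Finset.range (Q * r), f t
      = ∑ v ∈ Finset.range Q, ∑ u ∈ Finset.range r, f (v * r + u) := by
  induction Q with
  | zero => simp
  | succ Q ih =>
    rw [Nat.succ_mul, Finset.sum_range_add, ih, Finset.sum_range_succ]

private lemma sum_range_periodic {K : Type*} [AddCommMonoid K] (f : ℕ → K) (Q r : ℕ)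
    (hf : ∀ t, f (t + r) = f t) :
    ∑ t ∈ Finset.range (Q * r), f t = Q • ∑ t ∈ Finset.range r, f t := by
  rw [sum_range_mul_split]
  have hv : ∀ v u, f (v * r + u) = f u := by
    intro v
    induction v with
    | zero => simp
    | succ v ih =>
      intro u
      have h : (v + 1) * r + u = (v * r + u) + r := by ring
      rw [h, hf, ih]
  calc ∑ v ∈ Finset.range Q, ∑ u ∈ Finset.range r, f (v * r + u)
      = ∑ v ∈ Finset.range Q, ∑ u ∈ Finset.range r, f u := by
        refine Finset.sum_congr rfl fun v _ => Finset.sum_congr rfl fun u _ => hv v u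
    _ = Q • ∑ t ∈ Finset.range r, f t := by rw [Finset.sum_const, Finset.card_range]

private lemma sq_pow_modEq_one (g M r : ℕ) (hord : orderOf (g : ZMod M) ∣ 2 * r) :
    (g ^ 2) ^ r ≡ 1 [MOD M] := by
  have h1 : ((g : ZMod M)) ^ (2 * r) = 1 := orderOf_dvd_iff_pow_eq_one.mp hord
  have h2 : (((g ^ 2) ^ r : ℕ) : ZMod M) = ((1 : ℕ) : ZMod M) := by
    push_cast
    rw [← pow_mul]
    exact h1
  exact (ZMod.natCast_eq_natCast_iff _ _ _).mp h2

private lemma key_expand (P E p2 c0 w v : ℕ) (hPP : P * P = E * p2) :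
    (1 + v * w * P) * (1 + w * P + E * c0)
      = (1 + (v + 1) * w * P) + E * (v * w * w * p2 + (1 + v * w * P) * c0) := by
  zify at hPP ⊢
  linear_combination (v * w * w : ℤ) * hPP

private lemma GC0_eq (g M dH : ℕ) :
    GC0 g 1 M dH 1 = (Finset.range dH).image (fun t => g ^ (2 * t) % M) := by
  ext a
  simp only [GC0, Finset.mem_image, Finset.mem_product, Finset.mem_range, Prod.exists]
  constructor
  · rintro ⟨t, k, ⟨ht, hk⟩, he⟩
    exact ⟨t, ht, by simpa using he⟩
  · rintro ⟨t, ht, he⟩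
    exact ⟨t, 0, ⟨ht, Nat.zero_lt_one⟩, by simpa using he⟩

private lemma sum_scaled_gc1 {K : Type*} [CommRing K] (x : K) (g c M dH : ℕ)
    (hc : 0 < c) (hdH : 0 < dH)
    (hord : orderOf (g : ZMod M) = 2 * dH)
    (hx : x ^ (c * M) = 1) :
    ∑ t ∈ scaled c (GC 1 g 1 M dH 1), x ^ t
      = ∑ t ∈ Finset.range dH, (x ^ (c * g)) ^ ((g ^ 2) ^ t) := by
  have hfin : IsOfFinOrder (g : ZMod M) := by
    rw [← orderOf_pos_iff, hord]; omega
  set u : (ZMod M)ˣ := hfin.unit with hudef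
  have hcoe : (u : ZMod M) = (g : ZMod M) := rfl
  have hordu : orderOf u = 2 * dH := by rw [← orderOf_units, hcoe, hord]
  have hset : scaled c (GC 1 g 1 M dH 1)
      = (Finset.range dH).image (fun t => c * (g * (g ^ (2 * t) % M) % M)) := by
    show ((GC 1 g 1 M dH 1).image fun x => c * x) = _
    rw [show GC 1 g 1 M dH 1 = GC1 g 1 M dH 1 by simp [GC], GC1, GC0_eq,
      Finset.image_image, Finset.image_image]
    rfl
  rw [hset]
  rw [Finset.sum_image ?inj]
  case inj =>
    intro t ht t' ht' h
    simp only [Finset.mem_coe, Finset.mem_range] at ht ht'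
    have h2 := Nat.eq_of_mul_eq_mul_left hc h
    have h3 : (g : ZMod M) ^ (2 * t + 1) = (g : ZMod M) ^ (2 * t' + 1) := by
      have hcast := congrArg (Nat.cast : ℕ → ZMod M) h2
      push_cast [ZMod.natCast_mod] at hcast
      rw [pow_succ, pow_succ, mul_comm ((g : ZMod M) ^ (2 * t)),
        mul_comm ((g : ZMod M) ^ (2 * t'))]
      exact hcast
    have h4 : u ^ (2 * t + 1) = u ^ (2 * t' + 1) := by
      apply Units.ext
      rw [Units.val_pow_eq_pow_val, Units.val_pow_eq_pow_val, hcoe]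
      exact h3
    have h5 : 2 * t + 1 ≡ 2 * t' + 1 [MOD 2 * dH] := by
      rw [← hordu]; exact pow_eq_pow_iff_modEq.mp h4
    have h6 := h5
    unfold Nat.ModEq at h6
    rw [Nat.mod_eq_of_lt (by omega), Nat.mod_eq_of_lt (by omega)] at h6
    omega
  refine Finset.sum_congr rfl fun t _ => ?_
  have hmod : c * (g * (g ^ (2 * t) % M) % M) ≡ c * (g ^ (2 * t + 1)) [MOD c * M] := by
    refine Nat.ModEq.mul_left' (c := c) ?_
    calc g * (g ^ (2 * t) % M) % M
        ≡ g * (g ^ (2 * t) % M) [MOD M] := Nat.mod_modEq _ _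
      _ ≡ g * g ^ (2 * t) [MOD M] := Nat.ModEq.mul_left g (Nat.mod_modEq _ _)
      _ = g ^ (2 * t + 1) := by rw [pow_succ, mul_comm]
  rw [pow_eq_of_modEq' hx hmod, ← pow_mul]
  congr 1
  rw [← pow_mul, pow_succ]
  ring

theorem statement7
    (p q m n g y : ℕ)
    (hp : p.Prime) (hq : q.Prime) (hpq : p ≠ q) (hpodd : Odd p) (hqodd : Odd q)
    (hm : 1 ≤ m) (hn : 1 ≤ n) (hgodd : Odd g)
    (hgp : ∀ i, 1 ≤ i → i ≤ m → orderOf (g : ZMod (p ^ i)) = Nat.totient (p ^ i))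
    (hg2p : ∀ i, 1 ≤ i → i ≤ m → orderOf (g : ZMod (2 * p ^ i)) = Nat.totient (2 * p ^ i))
    (hgq : ∀ j, 1 ≤ j → j ≤ n → orderOf (g : ZMod (q ^ j)) = Nat.totient (q ^ j))
    (hg2q : ∀ j, 1 ≤ j → j ≤ n → orderOf (g : ZMod (2 * q ^ j)) = Nat.totient (2 * q ^ j))
    (hylt : y < 2 * (p ^ m * q ^ n))
    (hyg : y ≡ g [MOD 2 * p ^ m]) (hy1 : y ≡ 1 [MOD 2 * q ^ n])
    (K : Type*) [Field K] [Fintype K]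
    (hK : Fintype.card K = 4 ^ orderOf (4 : ZMod (p ^ m * q ^ n)))
    (β : K) (hβ : IsPrimitiveRoot β (p ^ m * q ^ n))
    (A B l : ℕ) (hA : A ≤ m - 1) (hB : B ≤ n - 1) (hl : Nat.gcd l (p * q) = 1)
    : ∀ i, 1 ≤ i → i ≤ m →
      ((i ≤ A →
          ∑ t ∈ H2P p q m n g 1 i, (β ^ (p ^ A * q ^ B * l)) ^ t
            = ((p ^ (i - 1) * (p - 1) / 2 : ℕ) : K)) ∧
        (i = A + 1 →
          ∑ t ∈ H2P p q m n g 1 i, (β ^ (p ^ A * q ^ B * l)) ^ t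
            = ∑ t ∈ DP p g 1 1, (β ^ (p ^ (m - 1) * q ^ (n + B))) ^ (l * t)) ∧
        (A + 1 < i →
          ∑ t ∈ H2P p q m n g 1 i, (β ^ (p ^ A * q ^ B * l)) ^ t = 0)) := by
  haveI := Fact.mk hp
  have hppos : 0 < p := hp.pos
  have hp3 : 3 ≤ p := by
    rcases hpodd with ⟨u, hu⟩; have := hp.two_le; omega
  have hdvd2 : 2 ∣ p - 1 := by
    rcases hpodd with ⟨u, hu⟩; exact ⟨u, by omega⟩
  have hβN : β ^ (p ^ m * q ^ n) = 1 := hβ.pow_eq_one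
  have hA1m : A + 1 ≤ m := by omega
  -- characteristic 2
  have htwoK : (2 : K) = 0 := by
    have hcard : ((Fintype.card K : ℕ) : K) = 0 := FiniteField.cast_card_eq_zero K
    rw [hK] at hcard
    push_cast at hcard
    by_cases hd : orderOf (4 : ZMod (p ^ m * q ^ n)) = 0
    · rw [hd, pow_zero] at hcard
      exact absurd hcard one_ne_zero
    · have h4 : (4 : K) = 0 := pow_eq_zero_iff hd |>.mp hcard
      have h22 : (2 : K) * 2 = 0 := by rw [show (2 : K) * 2 = 4 by norm_num, h4]
      exact mul_self_eq_zero.mp h22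
  have hoddK : ∀ Q : ℕ, Q % 2 = 1 → (Q : K) = 1 := by
    intro Q hQ
    obtain ⟨u, hu⟩ : ∃ u, Q = 2 * u + 1 := ⟨Q / 2, by omega⟩
    subst hu; push_cast; rw [htwoK]; ring
  -- g coprime to p
  have hgcp : Nat.Coprime g p := by
    have h1 := hgp 1 le_rfl hm
    have hfin : IsOfFinOrder (g : ZMod (p ^ 1)) := by
      rw [← orderOf_pos_iff, h1]
      exact Nat.totient_pos.mpr (pow_pos hppos 1)
    have := (ZMod.isUnit_iff_coprime g (p ^ 1)).mp hfin.isUnit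
    simpa using this
  have hpng : ¬ p ∣ g := (hp.coprime_iff_not_dvd).mp hgcp.symm
  have hpnl : ¬ p ∣ l := by
    intro hd
    have h1 : p ∣ Nat.gcd l (p * q) := Nat.dvd_gcd hd (dvd_mul_right p q)
    rw [hl] at h1
    have := Nat.le_of_dvd one_pos h1
    omega
  have hpnZ : ¬ p ∣ q ^ B * l * g := by
    intro hd
    rcases (hp.dvd_mul).mp hd with hd1 | hd1
    · rcases (hp.dvd_mul).mp hd1 with hd2 | hd2
      · have := hp.dvd_of_dvd_pow hd2
        exact hpq ((Nat.prime_dvd_prime_iff_eq hp hq).mp this)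
      · exact hpnl hd2
    · exact hpng hd1
  intro i hi1 him
  have hdHpos : 0 < p ^ (i - 1) * (p - 1) / 2 := by
    have h1 : (2 : ℕ) ≤ p - 1 := by omega
    have h2 : 1 * 2 ≤ p ^ (i - 1) * (p - 1) :=
      Nat.mul_le_mul (Nat.one_le_pow _ _ hppos) h1
    omega
  have h2dH : 2 * (p ^ (i - 1) * (p - 1) / 2) = p ^ (i - 1) * (p - 1) :=
    Nat.mul_div_cancel' (Dvd.dvd.mul_left hdvd2 _)
  have hcpos : 0 < p ^ (m - i) * q ^ n := Nat.mul_pos (pow_pos hppos _) (pow_pos hq.pos _)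
  have hordM : orderOf (g : ZMod (2 * p ^ i)) = 2 * (p ^ (i - 1) * (p - 1) / 2) := by
    rw [hg2p i hi1 him,
      Nat.totient_mul ((Nat.coprime_two_left.mpr hpodd).pow_right i),
      Nat.totient_two, one_mul, Nat.totient_prime_pow hp (by omega), h2dH]
  have hcM : p ^ (m - i) * q ^ n * (2 * p ^ i) = 2 * (p ^ m * q ^ n) := by
    have h1 : p ^ (m - i) * p ^ i = p ^ m := by rw [← pow_add]; congr 1; omega
    calc p ^ (m - i) * q ^ n * (2 * p ^ i)
        = p ^ (m - i) * p ^ i * q ^ n * 2 := by ring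
      _ = p ^ m * q ^ n * 2 := by rw [h1]
      _ = 2 * (p ^ m * q ^ n) := by ring
  have hx : (β ^ (p ^ A * q ^ B * l)) ^ (p ^ (m - i) * q ^ n * (2 * p ^ i)) = 1 := by
    rw [hcM, ← pow_mul,
      show p ^ A * q ^ B * l * (2 * (p ^ m * q ^ n))
        = p ^ m * q ^ n * (2 * (p ^ A * q ^ B * l)) by ring,
      pow_mul, hβN, one_pow]
  have master : ∑ t ∈ H2P p q m n g 1 i, (β ^ (p ^ A * q ^ B * l)) ^ t
      = ∑ t ∈ Finset.range (p ^ (i - 1) * (p - 1) / 2),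
          ((β ^ (p ^ A * q ^ B * l)) ^ (p ^ (m - i) * q ^ n * g)) ^ ((g ^ 2) ^ t) := by
    have h := sum_scaled_gc1 (β ^ (p ^ A * q ^ B * l)) g (p ^ (m - i) * q ^ n)
      (2 * p ^ i) (p ^ (i - 1) * (p - 1) / 2) hcpos hdHpos hordM hx
    simpa only [H2P, D2P] using h
  refine ⟨fun hc1 => ?_, fun hc2 => ?_, fun hc3 => ?_⟩
  -- Case 1 : i ≤ A
  · have hE : p ^ A * q ^ B * l * (p ^ (m - i) * q ^ n * g)
        = p ^ m * q ^ n * (p ^ (A - i) * q ^ B * l * g) := by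
      have hpp : p ^ A * p ^ (m - i) = p ^ m * p ^ (A - i) := by
        rw [← pow_add, ← pow_add]; congr 1; omega
      calc p ^ A * q ^ B * l * (p ^ (m - i) * q ^ n * g)
          = p ^ A * p ^ (m - i) * (q ^ B * l * (q ^ n * g)) := by ring
        _ = p ^ m * p ^ (A - i) * (q ^ B * l * (q ^ n * g)) := by rw [hpp]
        _ = p ^ m * q ^ n * (p ^ (A - i) * q ^ B * l * g) := by ring
    have hone : (β ^ (p ^ A * q ^ B * l)) ^ (p ^ (m - i) * q ^ n * g) = 1 := by
      rw [← pow_mul, hE, pow_mul, hβN, one_pow]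
    rw [master]
    simp only [hone, one_pow]
    rw [Finset.sum_const, Finset.card_range, nsmul_eq_mul, mul_one]
  -- Case 2 : i = A + 1
  · subst hc2
    have hdH1pos : 0 < p ^ (1 - 1) * (p - 1) / 2 := by
      simp only [Nat.sub_self, pow_zero, one_mul]
      omega
    have hordp : orderOf (g : ZMod (p ^ 1)) = 2 * (p ^ (1 - 1) * (p - 1) / 2) := by
      rw [hgp 1 le_rfl hm, Nat.totient_prime_pow hp one_pos]
      simp only [Nat.sub_self, pow_zero, one_mul]
      omega
    have hx2 : ((β ^ (p ^ (m - 1) * q ^ (n + B))) ^ l) ^ (1 * p ^ 1) = 1 := by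
      rw [← pow_mul, ← pow_mul]
      have hE2 : p ^ (m - 1) * q ^ (n + B) * (l * (1 * p ^ 1))
          = p ^ m * q ^ n * (q ^ B * l) := by
        have h1 : p ^ (m - 1) * p ^ 1 = p ^ m := by rw [← pow_add]; congr 1; omega
        have h2 : q ^ (n + B) = q ^ n * q ^ B := pow_add q n B
        calc p ^ (m - 1) * q ^ (n + B) * (l * (1 * p ^ 1))
            = p ^ (m - 1) * p ^ 1 * (q ^ (n + B) * l) := by ring
          _ = p ^ m * (q ^ n * q ^ B * l) := by rw [h1, h2]
          _ = p ^ m * q ^ n * (q ^ B * l) := by ring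
      rw [hE2, pow_mul, hβN, one_pow]
    have hRHS : ∑ t ∈ DP p g 1 1, (β ^ (p ^ (m - 1) * q ^ (n + B))) ^ (l * t)
        = ∑ t ∈ Finset.range (p ^ (1 - 1) * (p - 1) / 2),
            (((β ^ (p ^ (m - 1) * q ^ (n + B))) ^ l) ^ (1 * g)) ^ ((g ^ 2) ^ t) := by
      have hstep := sum_scaled_gc1 ((β ^ (p ^ (m - 1) * q ^ (n + B))) ^ l) g 1 (p ^ 1)
        (p ^ (1 - 1) * (p - 1) / 2) one_pos hdH1pos hordp hx2
      rw [← hstep]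
      have hsets : scaled 1 (GC 1 g 1 (p ^ 1) (p ^ (1 - 1) * (p - 1) / 2) 1)
          = DP p g 1 1 := by
        unfold scaled
        rw [show (fun x : ℕ => 1 * x) = id from funext fun x => one_mul x,
          Finset.image_id]
        rfl
      rw [hsets]
      refine Finset.sum_congr rfl fun t _ => ?_
      rw [pow_mul]
    rw [master, hRHS]
    have hbases : (β ^ (p ^ A * q ^ B * l)) ^ (p ^ (m - (A + 1)) * q ^ n * g)
        = ((β ^ (p ^ (m - 1) * q ^ (n + B))) ^ l) ^ (1 * g) := by
      rw [← pow_mul, ← pow_mul, ← pow_mul]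
      congr 1
      have h1 : p ^ A * p ^ (m - (A + 1)) = p ^ (m - 1) := by
        rw [← pow_add]; congr 1; omega
      have h2 : q ^ (n + B) = q ^ n * q ^ B := pow_add q n B
      calc p ^ A * q ^ B * l * (p ^ (m - (A + 1)) * q ^ n * g)
          = p ^ A * p ^ (m - (A + 1)) * (q ^ B * l * (q ^ n * g)) := by ring
        _ = p ^ (m - 1) * (q ^ B * l * (q ^ n * g)) := by rw [h1]
        _ = p ^ (m - 1) * (q ^ n * q ^ B) * (l * (1 * g)) := by ring
        _ = p ^ (m - 1) * q ^ (n + B) * (l * (1 * g)) := by rw [h2]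
    rw [hbases]
    have hεp : (((β ^ (p ^ (m - 1) * q ^ (n + B))) ^ l) ^ (1 * g)) ^ (p ^ 1) = 1 := by
      rw [← pow_mul, ← pow_mul, ← pow_mul]
      have hE3 : p ^ (m - 1) * q ^ (n + B) * (l * (1 * g * p ^ 1))
          = p ^ m * q ^ n * (q ^ B * l * g) := by
        have h1 : p ^ (m - 1) * p ^ 1 = p ^ m := by rw [← pow_add]; congr 1; omega
        have h2 : q ^ (n + B) = q ^ n * q ^ B := pow_add q n B
        calc p ^ (m - 1) * q ^ (n + B) * (l * (1 * g * p ^ 1))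
            = p ^ (m - 1) * p ^ 1 * (q ^ (n + B) * (l * g)) := by ring
          _ = p ^ m * (q ^ n * q ^ B * (l * g)) := by rw [h1, h2]
          _ = p ^ m * q ^ n * (q ^ B * l * g) := by ring
      rw [hE3, pow_mul, hβN, one_pow]
    have hG1 : (g ^ 2) ^ ((p - 1) / 2) ≡ 1 [MOD p ^ 1] := by
      refine sq_pow_modEq_one g (p ^ 1) ((p - 1) / 2) ?_
      rw [hgp 1 le_rfl hm, Nat.totient_prime_pow hp one_pos]
      simp only [Nat.sub_self, pow_zero, one_mul]
      exact dvd_of_eq (by omega)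
    have hper : ∀ t, (((β ^ (p ^ (m - 1) * q ^ (n + B))) ^ l) ^ (1 * g))
        ^ ((g ^ 2) ^ (t + (p - 1) / 2))
        = (((β ^ (p ^ (m - 1) * q ^ (n + B))) ^ l) ^ (1 * g)) ^ ((g ^ 2) ^ t) := by
      intro t
      refine pow_eq_of_modEq' hεp ?_
      calc (g ^ 2) ^ (t + (p - 1) / 2)
          = (g ^ 2) ^ t * (g ^ 2) ^ ((p - 1) / 2) := pow_add _ _ _
        _ ≡ (g ^ 2) ^ t * 1 [MOD p ^ 1] := Nat.ModEq.mul_left _ hG1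
        _ = (g ^ 2) ^ t := mul_one _
    have hsplit : p ^ (A + 1 - 1) * (p - 1) / 2 = p ^ A * ((p - 1) / 2) := by
      rw [Nat.add_sub_cancel, Nat.mul_div_assoc _ hdvd2]
    rw [hsplit, sum_range_periodic _ (p ^ A) ((p - 1) / 2) hper, nsmul_eq_mul,
      hoddK (p ^ A) (Nat.odd_iff.mp hpodd.pow), one_mul]
    congr 1
    simp
  -- Case 3 : A + 1 < i
  · obtain ⟨s, hs2, rfl⟩ : ∃ s, 2 ≤ s ∧ i = A + s := ⟨i - A, by omega, by omega⟩
    rw [master]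
    have hps : p ^ (s - 1) * p = p ^ s := by rw [← pow_succ]; congr 1; omega
    have hps2 : p ^ (s - 2) * p = p ^ (s - 1) := by rw [← pow_succ]; congr 1; omega
    have hεps : ((β ^ (p ^ A * q ^ B * l)) ^ (p ^ (m - (A + s)) * q ^ n * g)) ^ (p ^ s)
        = 1 := by
      rw [← pow_mul, ← pow_mul]
      have hE : p ^ A * q ^ B * l * (p ^ (m - (A + s)) * q ^ n * g * p ^ s)
          = p ^ m * q ^ n * (q ^ B * l * g) := by
        have h1 : p ^ A * p ^ (m - (A + s)) * p ^ s = p ^ m := by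
          rw [← pow_add, ← pow_add]; congr 1; omega
        calc p ^ A * q ^ B * l * (p ^ (m - (A + s)) * q ^ n * g * p ^ s)
            = p ^ A * p ^ (m - (A + s)) * p ^ s * (q ^ B * l * (q ^ n * g)) := by ring
          _ = p ^ m * (q ^ B * l * (q ^ n * g)) := by rw [h1]
          _ = p ^ m * q ^ n * (q ^ B * l * g) := by ring
      rw [hE, pow_mul, hβN, one_pow]
    have hords : orderOf (g : ZMod (p ^ s)) = p ^ (s - 1) * (p - 1) := by
      rw [hgp s (by omega) (by omega), Nat.totient_prime_pow hp (by omega)]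
    have hords1 : orderOf (g : ZMod (p ^ (s - 1))) = p ^ (s - 2) * (p - 1) := by
      rw [hgp (s - 1) (by omega) (by omega), Nat.totient_prime_pow hp (by omega),
        show s - 1 - 1 = s - 2 from by omega]
    have hGr : (g ^ 2) ^ (p ^ (s - 1) * ((p - 1) / 2)) ≡ 1 [MOD p ^ s] := by
      refine sq_pow_modEq_one g (p ^ s) _ ?_
      rw [hords]
      apply dvd_of_eq
      have h2 : 2 * ((p - 1) / 2) = p - 1 := by omega
      calc p ^ (s - 1) * (p - 1) = p ^ (s - 1) * (2 * ((p - 1) / 2)) := by rw [h2]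
        _ = 2 * (p ^ (s - 1) * ((p - 1) / 2)) := by ring
    have hper : ∀ t, ((β ^ (p ^ A * q ^ B * l)) ^ (p ^ (m - (A + s)) * q ^ n * g))
        ^ ((g ^ 2) ^ (t + p ^ (s - 1) * ((p - 1) / 2)))
        = ((β ^ (p ^ A * q ^ B * l)) ^ (p ^ (m - (A + s)) * q ^ n * g))
        ^ ((g ^ 2) ^ t) := by
      intro t
      refine pow_eq_of_modEq' hεps ?_
      calc (g ^ 2) ^ (t + p ^ (s - 1) * ((p - 1) / 2))
          = (g ^ 2) ^ t * (g ^ 2) ^ (p ^ (s - 1) * ((p - 1) / 2)) := pow_add _ _ _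
        _ ≡ (g ^ 2) ^ t * 1 [MOD p ^ s] := Nat.ModEq.mul_left _ hGr
        _ = (g ^ 2) ^ t := mul_one _
    have hIdx : p ^ (A + s - 1) * (p - 1) / 2
        = p ^ A * (p ^ (s - 1) * ((p - 1) / 2)) := by
      rw [Nat.mul_div_assoc _ hdvd2,
        show p ^ (A + s - 1) = p ^ A * p ^ (s - 1) from by rw [← pow_add]; congr 1; omega,
        mul_assoc]
    rw [hIdx, sum_range_periodic _ _ _ hper, nsmul_eq_mul,
      hoddK (p ^ A) (Nat.odd_iff.mp hpodd.pow), one_mul]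
    have hr : p ^ (s - 1) * ((p - 1) / 2) = p * (p ^ (s - 2) * ((p - 1) / 2)) := by
      rw [show p ^ (s - 1) = p * p ^ (s - 2) from by rw [mul_comm]; exact hps2.symm,
        mul_assoc]
    rw [hr, sum_range_mul_split, Finset.sum_comm]
    refine Finset.sum_eq_zero fun u _ => ?_
    -- inner sum over v < p vanishes
    have hyP : (g ^ 2) ^ (p ^ (s - 2) * ((p - 1) / 2)) ≡ 1 [MOD p ^ (s - 1)] := by
      refine sq_pow_modEq_one g (p ^ (s - 1)) _ ?_
      rw [hords1]
      apply dvd_of_eq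
      have h2 : 2 * ((p - 1) / 2) = p - 1 := by omega
      calc p ^ (s - 2) * (p - 1) = p ^ (s - 2) * (2 * ((p - 1) / 2)) := by rw [h2]
        _ = 2 * (p ^ (s - 2) * ((p - 1) / 2)) := by ring
    have hP1 : 1 < p ^ (s - 1) := Nat.one_lt_pow (by omega) (by omega)
    have hy1 : 1 ≤ (g ^ 2) ^ (p ^ (s - 2) * ((p - 1) / 2)) := by
      have hg0 : g ≠ 0 := by rintro rfl; simp [Nat.odd_iff] at hgodd
      exact Nat.one_le_iff_ne_zero.mpr (pow_ne_zero _ (pow_ne_zero _ hg0))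
    have hymod : (g ^ 2) ^ (p ^ (s - 2) * ((p - 1) / 2)) % p ^ (s - 1) = 1 := by
      have := hyP
      unfold Nat.ModEq at this
      rwa [Nat.mod_eq_of_lt hP1] at this
    have hyd : (g ^ 2) ^ (p ^ (s - 2) * ((p - 1) / 2))
        = p ^ (s - 1) * ((g ^ 2) ^ (p ^ (s - 2) * ((p - 1) / 2)) / p ^ (s - 1)) + 1 := by
      conv_lhs => rw [← Nat.div_add_mod ((g ^ 2) ^ (p ^ (s - 2) * ((p - 1) / 2))) (p ^ (s - 1))]
      rw [hymod]
    set u0 : ℕ := (g ^ 2) ^ (p ^ (s - 2) * ((p - 1) / 2)) / p ^ (s - 1) with hu0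
    set w : ℕ := u0 % p with hwdef
    set c0 : ℕ := u0 / p with hc0def
    have hydecomp : (g ^ 2) ^ (p ^ (s - 2) * ((p - 1) / 2))
        = 1 + w * p ^ (s - 1) + p ^ s * c0 := by
      have hsplit : u0 = p * c0 + w := by
        rw [hwdef, hc0def]; exact (Nat.div_add_mod u0 p).symm
      calc (g ^ 2) ^ (p ^ (s - 2) * ((p - 1) / 2))
          = p ^ (s - 1) * u0 + 1 := hyd
        _ = p ^ (s - 1) * (p * c0 + w) + 1 := by rw [← hsplit]
        _ = 1 + w * p ^ (s - 1) + (p ^ (s - 1) * p) * c0 := by ring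
        _ = 1 + w * p ^ (s - 1) + p ^ s * c0 := by rw [hps]
    have hwlt : w < p := Nat.mod_lt _ hppos
    have hw0 : w ≠ 0 := by
      intro hw
      have hmodps : (g ^ 2) ^ (p ^ (s - 2) * ((p - 1) / 2)) ≡ 1 [MOD p ^ s] := by
        rw [hydecomp, hw]
        simp only [zero_mul, add_zero, Nat.zero_add]
        exact (Nat.ModEq.symm ((Nat.modEq_iff_dvd' (by omega)).mpr ⟨c0, by omega⟩))
      have hy1s : ((g : ZMod (p ^ s))) ^ (2 * (p ^ (s - 2) * ((p - 1) / 2))) = 1 := by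
        have hcast := (ZMod.natCast_eq_natCast_iff _ _ _).mpr hmodps
        push_cast at hcast
        rwa [← pow_mul] at hcast
      have hdvd := orderOf_dvd_iff_pow_eq_one.mpr hy1s
      rw [hords] at hdvd
      have hpos : 0 < 2 * (p ^ (s - 2) * ((p - 1) / 2)) := by
        have : 0 < p ^ (s - 2) := pow_pos hppos _
        have : 1 ≤ (p - 1) / 2 := by omega
        positivity
      have hle := Nat.le_of_dvd hpos hdvd
      have h2 : 2 * (p ^ (s - 2) * ((p - 1) / 2)) = p ^ (s - 2) * (p - 1) := by
        have h22 : 2 * ((p - 1) / 2) = p - 1 := by omega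
        calc 2 * (p ^ (s - 2) * ((p - 1) / 2)) = p ^ (s - 2) * (2 * ((p - 1) / 2)) := by ring
          _ = p ^ (s - 2) * (p - 1) := by rw [h22]
      rw [h2] at hle
      have h3 : p ^ (s - 1) = p * p ^ (s - 2) := by rw [mul_comm]; exact hps2.symm
      rw [h3] at hle
      have h4 : 0 < p ^ (s - 2) * (p - 1) := Nat.mul_pos (pow_pos hppos _) (by omega)
      have h5 : p * (p ^ (s - 2) * (p - 1)) ≤ 1 * (p ^ (s - 2) * (p - 1)) := by
        calc p * (p ^ (s - 2) * (p - 1)) = p * p ^ (s - 2) * (p - 1) := by ring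
          _ ≤ p ^ (s - 2) * (p - 1) := hle
          _ = 1 * (p ^ (s - 2) * (p - 1)) := by ring
      have h6 := Nat.le_of_mul_le_mul_right h5 h4
      omega
    have hyv : ∀ v, ((g ^ 2) ^ (p ^ (s - 2) * ((p - 1) / 2))) ^ v
        ≡ 1 + v * w * p ^ (s - 1) [MOD p ^ s] := by
      intro v
      induction v with
      | zero => simp [Nat.ModEq]
      | succ v ih =>
        have hPP : p ^ (s - 1) * p ^ (s - 1) = p ^ s * p ^ (s - 2) := by
          rw [← pow_add, ← pow_add]; congr 1; omega
        calc ((g ^ 2) ^ (p ^ (s - 2) * ((p - 1) / 2))) ^ (v + 1)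
            = ((g ^ 2) ^ (p ^ (s - 2) * ((p - 1) / 2))) ^ v
              * ((g ^ 2) ^ (p ^ (s - 2) * ((p - 1) / 2))) := pow_succ _ _
          _ ≡ (1 + v * w * p ^ (s - 1)) * ((g ^ 2) ^ (p ^ (s - 2) * ((p - 1) / 2)))
              [MOD p ^ s] := Nat.ModEq.mul_right _ ih
          _ = (1 + (v + 1) * w * p ^ (s - 1))
              + p ^ s * (v * w * w * p ^ (s - 2) + (1 + v * w * p ^ (s - 1)) * c0) := by
              rw [hydecomp]
              exact key_expand (p ^ (s - 1)) (p ^ s) (p ^ (s - 2)) c0 w v hPP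
          _ ≡ 1 + (v + 1) * w * p ^ (s - 1) [MOD p ^ s] :=
              Nat.ModEq.symm ((Nat.modEq_iff_dvd' (Nat.le_add_right _ _)).mpr
                ⟨v * w * w * p ^ (s - 2) + (1 + v * w * p ^ (s - 1)) * c0, by omega⟩)
    have hterm : ∀ v, ((β ^ (p ^ A * q ^ B * l)) ^ (p ^ (m - (A + s)) * q ^ n * g))
        ^ ((g ^ 2) ^ (v * (p ^ (s - 2) * ((p - 1) / 2)) + u))
        = ((β ^ (p ^ A * q ^ B * l)) ^ (p ^ (m - (A + s)) * q ^ n * g)) ^ ((g ^ 2) ^ u)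
          * ((((β ^ (p ^ A * q ^ B * l)) ^ (p ^ (m - (A + s)) * q ^ n * g))
              ^ (p ^ (s - 1))) ^ ((g ^ 2) ^ u * w)) ^ v := by
      intro v
      have hE1 : (g ^ 2) ^ (v * (p ^ (s - 2) * ((p - 1) / 2)) + u)
          = (g ^ 2) ^ u * ((g ^ 2) ^ (p ^ (s - 2) * ((p - 1) / 2))) ^ v := by
        rw [pow_add, pow_mul']
        ring
      rw [hE1]
      have hmodEq : (g ^ 2) ^ u * ((g ^ 2) ^ (p ^ (s - 2) * ((p - 1) / 2))) ^ v
          ≡ (g ^ 2) ^ u * (1 + v * w * p ^ (s - 1)) [MOD p ^ s] :=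
        Nat.ModEq.mul_left _ (hyv v)
      rw [pow_eq_of_modEq' hεps hmodEq,
        show (g ^ 2) ^ u * (1 + v * w * p ^ (s - 1))
          = (g ^ 2) ^ u + p ^ (s - 1) * ((g ^ 2) ^ u * w) * v by ring,
        pow_add]
      congr 1
      rw [pow_mul, pow_mul]
    have hzp : ((((β ^ (p ^ A * q ^ B * l)) ^ (p ^ (m - (A + s)) * q ^ n * g))
        ^ (p ^ (s - 1))) ^ ((g ^ 2) ^ u * w)) ^ p = 1 := by
      rw [← pow_mul, ← pow_mul,
        show p ^ (s - 1) * ((g ^ 2) ^ u * w * p) = p ^ s * ((g ^ 2) ^ u * w) from by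
          rw [← hps]; ring,
        pow_mul, hεps, one_pow]
    have hωord : orderOf (((β ^ (p ^ A * q ^ B * l))
        ^ (p ^ (m - (A + s)) * q ^ n * g)) ^ (p ^ (s - 1))) = p := by
      refine orderOf_eq_prime ?_ ?_
      · rw [← pow_mul, hps, hεps]
      · intro hone
        rw [← pow_mul, ← pow_mul] at hone
        have hEP : p ^ A * q ^ B * l * (p ^ (m - (A + s)) * q ^ n * g * p ^ (s - 1))
            = p ^ (m - 1) * q ^ n * (q ^ B * l * g) := by
          have h1 : p ^ A * p ^ (m - (A + s)) * p ^ (s - 1) = p ^ (m - 1) := by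
            rw [← pow_add, ← pow_add]; congr 1; omega
          calc p ^ A * q ^ B * l * (p ^ (m - (A + s)) * q ^ n * g * p ^ (s - 1))
              = p ^ A * p ^ (m - (A + s)) * p ^ (s - 1) * (q ^ B * l * (q ^ n * g)) := by
                ring
            _ = p ^ (m - 1) * (q ^ B * l * (q ^ n * g)) := by rw [h1]
            _ = p ^ (m - 1) * q ^ n * (q ^ B * l * g) := by ring
        rw [hEP] at hone
        have hdvd := (hβ.pow_eq_one_iff_dvd _).mp hone
        have hfact : p ^ m * q ^ n = p ^ (m - 1) * q ^ n * p := by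
          have h1 : p ^ (m - 1) * p = p ^ m := by rw [← pow_succ]; congr 1; omega
          rw [← h1]; ring
        rw [hfact] at hdvd
        have hpos : 0 < p ^ (m - 1) * q ^ n :=
          Nat.mul_pos (pow_pos hppos _) (pow_pos hq.pos _)
        have := (Nat.mul_dvd_mul_iff_left hpos).mp hdvd
        exact hpnZ this
    have hzne : (((β ^ (p ^ A * q ^ B * l)) ^ (p ^ (m - (A + s)) * q ^ n * g))
        ^ (p ^ (s - 1))) ^ ((g ^ 2) ^ u * w) ≠ 1 := by
      intro h1
      have hdvd := orderOf_dvd_iff_pow_eq_one.mpr h1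
      rw [hωord] at hdvd
      rcases (hp.dvd_mul).mp hdvd with hd | hd
      · exact hpng (hp.dvd_of_dvd_pow (hp.dvd_of_dvd_pow hd))
      · have := Nat.le_of_dvd (by omega) hd
        omega
    calc ∑ v ∈ Finset.range p,
          ((β ^ (p ^ A * q ^ B * l)) ^ (p ^ (m - (A + s)) * q ^ n * g))
            ^ ((g ^ 2) ^ (v * (p ^ (s - 2) * ((p - 1) / 2)) + u))
        = ∑ v ∈ Finset.range p,
            ((β ^ (p ^ A * q ^ B * l)) ^ (p ^ (m - (A + s)) * q ^ n * g)) ^ ((g ^ 2) ^ u)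
              * ((((β ^ (p ^ A * q ^ B * l)) ^ (p ^ (m - (A + s)) * q ^ n * g))
                  ^ (p ^ (s - 1))) ^ ((g ^ 2) ^ u * w)) ^ v :=
          Finset.sum_congr rfl fun v _ => hterm v
      _ = ((β ^ (p ^ A * q ^ B * l)) ^ (p ^ (m - (A + s)) * q ^ n * g)) ^ ((g ^ 2) ^ u)
            * ∑ v ∈ Finset.range p,
              ((((β ^ (p ^ A * q ^ B * l)) ^ (p ^ (m - (A + s)) * q ^ n * g))
                  ^ (p ^ (s - 1))) ^ ((g ^ 2) ^ u * w)) ^ v := by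
          rw [Finset.mul_sum]
      _ = 0 := by
          rw [geom_sum_eq hzne, hzp]
          simp


end
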